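/- Let mb : {0,1}* → ℚ be the word function assigning to w the maximum size of a block of 1's in w (a block of 1's is a maximal set of consecutive positions carrying the letter 1; mb(w) = 0 if w contains no 1). Then the Hankel matrix of mb has infinite rank over ℚ; hence mb is not recognizable by any weighted automaton over ℚ. -/
import Mathlib


open Matrix

def wordProd {S : Type*} [CommSemiring S] {A : Type*} {r : ℕ}
    (μ : A → Matrix (Fin r) (Fin r) S) (w : List A) : Matrix (Fin r) (Fin r) S :=
  (w.map μ).prod

/-- Auxiliary: `maxRunAux w cur m` computes the maximum length of a run of `true`s in
`w`, where `cur` is the length of the current run and `m` the maximum seen so far. -/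
def maxRunAux : List Bool → ℕ → ℕ → ℕ
  | [], cur, m => max cur m
  | true :: t, cur, m => maxRunAux t (cur + 1) m
  | false :: t, cur, m => maxRunAux t 0 (max cur m)

/-- The maximum size of a block (maximal run) of `1`'s (`true`s) in a word; `0` if the
word contains no `1`. -/
def maxBlock (w : List Bool) : ℕ := maxRunAux w 0 0

lemma maxRunAux_replicate (k : ℕ) (rest : List Bool) (cur m : ℕ) :
    maxRunAux (List.replicate k true ++ rest) cur m = maxRunAux rest (cur + k) m := by
  induction k generalizing cur with
  | zero => simp
  | succ k ih =>
      rw [show cur + (k + 1) = cur + 1 + k by omega]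
      simp only [List.replicate_succ, List.cons_append, maxRunAux]
      exact ih (cur + 1)

lemma maxRunAux_max (v : List Bool) (cur m : ℕ) :
    maxRunAux v cur m = max m (maxRunAux v cur 0) := by
  induction v generalizing cur m with
  | nil => simp [maxRunAux]; omega
  | cons b t ih =>
      cases b with
      | true => simp only [maxRunAux]; exact ih _ _
      | false =>
          simp only [maxRunAux]
          rw [ih 0 (max cur m), ih 0 (max cur 0)]
          omega

lemma maxBlock_key (K : ℕ) (v : List Bool) :
    maxBlock (List.replicate K true ++ false :: v) = max K (maxBlock v) := by
  unfold maxBlock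
  rw [maxRunAux_replicate]
  simp only [Nat.zero_add, maxRunAux]
  rw [maxRunAux_max]
  omega

lemma maxBlock_replicate (K : ℕ) : maxBlock (List.replicate K true) = K := by
  unfold maxBlock
  rw [← List.append_nil (List.replicate K true), maxRunAux_replicate]
  simp [maxRunAux]

lemma indepAux (n : ℕ) :
    LinearIndependent ℚ
      (fun i : Fin n => (fun v : List Bool =>
        (maxBlock ((List.replicate ((i : ℕ) + 1) true ++ [false]) ++ v) : ℚ))) := by
  rw [Fintype.linearIndependent_iff]
  intro c hc
  have hT : ∀ j : ℕ, ∑ i : Fin n, c i * ((max ((i : ℕ) + 1) (j + 1) : ℕ) : ℚ) = 0 := by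
    intro j
    have h := congrFun hc (List.replicate (j + 1) true)
    simp only [Finset.sum_apply, Pi.smul_apply, smul_eq_mul, Pi.zero_apply,
      List.append_assoc, List.singleton_append, maxBlock_key, maxBlock_replicate] at h
    exact h
  have hS : ∀ j : ℕ, ∑ i : Fin n, (if (i : ℕ) ≤ j then c i else 0) = 0 := by
    intro j
    have h : ∑ i : Fin n, (c i * ((max ((i : ℕ) + 1) (j + 2) : ℕ) : ℚ)
        - c i * ((max ((i : ℕ) + 1) (j + 1) : ℕ) : ℚ)) = 0 := by
      rw [Finset.sum_sub_distrib]
      have h1 := hT (j + 1)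
      have h2 := hT j
      rw [show j + 1 + 1 = j + 2 by omega] at h1
      rw [h1, h2, sub_zero]
    refine Eq.trans ?_ h
    apply Finset.sum_congr rfl
    intro i _
    by_cases hij : (i : ℕ) ≤ j
    · rw [if_pos hij, Nat.max_eq_right (by omega), Nat.max_eq_right (by omega)]
      push_cast
      ring
    · rw [if_neg hij, Nat.max_eq_left (by omega), Nat.max_eq_left (by omega), sub_self]
  suffices h : ∀ k : ℕ, ∀ hk : k < n, c ⟨k, hk⟩ = 0 by
    intro i
    have := h i.1 i.2
    simpa using this
  intro k
  induction k using Nat.strong_induction_on with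
  | _ k IH =>
    intro hk
    have hsum : ∑ i : Fin n, (if (i : ℕ) ≤ k then c i else 0) = c ⟨k, hk⟩ := by
      rw [show c ⟨k, hk⟩ = ∑ i : Fin n, (if i = ⟨k, hk⟩ then c i else 0) by
        rw [Finset.sum_ite_eq' Finset.univ (⟨k, hk⟩ : Fin n) c]; simp]
      apply Finset.sum_congr rfl
      intro i _
      by_cases h1 : (i : ℕ) = k
      · have hi : i = ⟨k, hk⟩ := Fin.ext h1
        simp [hi]
      · have hne : i ≠ ⟨k, hk⟩ := fun h => h1 (by rw [h])
        rw [if_neg hne]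
        by_cases h2 : (i : ℕ) ≤ k
        · have hlt : (i : ℕ) < k := lt_of_le_of_ne h2 h1
          have := IH i hlt i.isLt
          simp only [Fin.eta] at this
          simp [h2, this]
        · rw [if_neg h2]
    rw [hS k] at hsum
    exact hsum.symm

lemma wordProd_append {r : ℕ} (μ : Bool → Matrix (Fin r) (Fin r) ℚ) (u v : List Bool) :
    wordProd μ (u ++ v) = wordProd μ u * wordProd μ v := by
  unfold wordProd
  rw [List.map_append, List.prod_append]

/-- The Hankel matrix of the maximum-block-of-1's function has infinite rank over `ℚ`;
hence this function is not recognizable by any weighted automaton over `ℚ`. -/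
theorem maxBlock_not_recognizable :
    (∀ n : ℕ, ∃ u : Fin n → List Bool,
      LinearIndependent ℚ
        (fun i : Fin n => (fun v : List Bool => (maxBlock (u i ++ v) : ℚ)))) ∧
    ¬ ∃ (r : ℕ) (α γ : Fin r → ℚ) (μ : Bool → Matrix (Fin r) (Fin r) ℚ),
      ∀ w : List Bool, (maxBlock w : ℚ) = α ⬝ᵥ (wordProd μ w *ᵥ γ) := by
  constructor
  · intro n
    exact ⟨fun i => List.replicate ((i : ℕ) + 1) true ++ [false], indepAux n⟩
  · rintro ⟨r, α, γ, μ, hμ⟩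
    set U : Fin (r + 1) → List Bool :=
      fun i => List.replicate ((i : ℕ) + 1) true ++ [false] with hU
    have hli := indepAux (r + 1)
    let Θ : (Fin r → ℚ) →ₗ[ℚ] (List Bool → ℚ) :=
      { toFun := fun β v => β ⬝ᵥ (wordProd μ v *ᵥ γ)
        map_add' := by intro x y; funext v; simp [add_dotProduct]
        map_smul' := by intro c x; funext v; simp [smul_dotProduct] }
    have key : (fun i : Fin (r + 1) => (fun v : List Bool =>
          (maxBlock ((List.replicate ((i : ℕ) + 1) true ++ [false]) ++ v) : ℚ)))
        = Θ ∘ (fun i => α ᵥ* wordProd μ (U i)) := by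
      funext i v
      simp only [Function.comp_apply, hU]
      rw [hμ, wordProd_append, ← Matrix.mulVec_mulVec, Matrix.dotProduct_mulVec]
      rfl
    rw [key] at hli
    have hb := hli.of_comp Θ
    have hcard := hb.fintype_card_le_finrank
    simp [Module.finrank_fintype_fun_eq_card] at hcard
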